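/- Consider the linear Markovian process X_t = A T_{t-1} + B X_{t-1} + η_t, Y_t = θ₀'T_t + μ'X_t + ε_t with exogenous mean-zero shocks, and define the dynamic effects ψ_m = θ₀ and ψ_t = A'(B')^{m-t-1} μ for t < m. Then for each t ∈ {1,...,m}, setting Ȳ_t = Y_m − Σ_{j=t+1}^m ψ_j' T_j, the conditional moment restriction E[Ȳ_t − ψ_t' T_t − μ'B^{m−t} X_t | T_t, X_t] = 0 holds. -/

import Mathlib

open MeasureTheory Matrix Finset ProbabilityTheory

/-- If a real integrable-style function with zero mean is independent of `Z`, then its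
conditional expectation given `σ(Z)` vanishes. -/
lemma condexp_zero_of_indepFun {Ω γ : Type*} {m0 : MeasurableSpace Ω}
    {mγ : MeasurableSpace γ} (μ : Measure Ω) [IsProbabilityMeasure μ]
    {f : Ω → ℝ} {Z : Ω → γ} (hf : Measurable f) (hZ : Measurable Z)
    (hind : IndepFun f Z μ) (hmean : ∫ ω, f ω ∂μ = 0) :
    μ[f | MeasurableSpace.comap Z mγ] =ᵐ[μ] fun _ => 0 := by
  have hind' : Indep (MeasurableSpace.comap f inferInstance)
      (MeasurableSpace.comap Z mγ) μ := (IndepFun_iff_Indep f Z μ).mp hind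
  have h := condExp_indep_eq (μ := μ) hf.comap_le hZ.comap_le
    ((measurable_iff_comap_le.mpr le_rfl).stronglyMeasurable (f := f)) hind'
  simpa [hmean] using h

/-- Conditional moment restriction for the dynamic effects of the linear Markovian model.
With `X_{s+1} = A T_s + B X_s + η_{s+1}`, `Y = θ₀'T_m + μ'X_m + ε`, dynamic effects
`ψ_m = θ₀`, `ψ_j = A'(B')^{m−j−1}μ` for `j < m`, and shocks `η_j` (`j > t`) and `ε`
mean zero and independent of `(T_t, X_t)`, one has for each `1 ≤ t ≤ m`, with
`Ȳ_t = Y − Σ_{j=t+1}^m ψ_j'T_j`: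
`E[Ȳ_t − ψ_t'T_t − μ'B^{m−t}X_t | T_t, X_t] = 0`. -/
theorem linear_markov_conditional_moment {Ω : Type*} {m0 : MeasurableSpace Ω}
    (μPr : Measure Ω) [IsProbabilityMeasure μPr]
    {p d : ℕ} (t m : ℕ) (ht : 1 ≤ t) (htm : t ≤ m)
    (A : Matrix (Fin p) (Fin d) ℝ) (B : Matrix (Fin p) (Fin p) ℝ)
    (θ₀ : Fin d → ℝ) (μv : Fin p → ℝ)
    (X η : ℕ → Ω → Fin p → ℝ) (T : ℕ → Ω → Fin d → ℝ) (Y : Ω → ℝ) (ε : Ω → ℝ)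
    -- structural equations:
    (hXeq : ∀ s, X (s + 1) = fun ω => A.mulVec (T s ω) + B.mulVec (X s ω) + η (s + 1) ω)
    (hYeq : Y = fun ω => θ₀ ⬝ᵥ T m ω + μv ⬝ᵥ X m ω + ε ω)
    -- measurability:
    (hXmeas : ∀ s, Measurable (X s)) (hTmeas : ∀ s, Measurable (T s))
    (hηmeas : ∀ s, Measurable (η s)) (hεmeas : Measurable ε)
    -- shocks after time t are mean zero and independent of (T_t, X_t):
    (hηind : ∀ j, t < j → j ≤ m → IndepFun (η j) (fun ω => (T t ω, X t ω)) μPr)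
    (hεind : IndepFun ε (fun ω => (T t ω, X t ω)) μPr)
    (hηmean : ∀ j i, ∫ ω, η j ω i ∂μPr = 0) (hεmean : ∫ ω, ε ω ∂μPr = 0)
    -- integrability:
    (hηint : ∀ j i, Integrable (fun ω => η j ω i) μPr) (hεint : Integrable ε μPr)
    (hTint : ∀ j i, Integrable (fun ω => T j ω i) μPr)
    (hXint : ∀ j i, Integrable (fun ω => X j ω i) μPr)
    (hYint : Integrable Y μPr)
    -- the dynamic treatment effects:
    (ψ : ℕ → Fin d → ℝ)
    (hψ : ∀ j, ψ j = if j = m then θ₀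
      else A.transpose.mulVec ((B.transpose ^ (m - j - 1)).mulVec μv)) :
    μPr[(fun ω =>
        (Y ω - ∑ j ∈ Finset.Icc (t + 1) m, ψ j ⬝ᵥ T j ω) - ψ t ⬝ᵥ T t ω -
          μv ⬝ᵥ ((B ^ (m - t)).mulVec (X t ω)))|
      MeasurableSpace.comap (fun ω => (T t ω, X t ω)) inferInstance] =ᵐ[μPr]
      fun _ => 0 := by
  classical
  set Z : Ω → (Fin d → ℝ) × (Fin p → ℝ) := fun ω => (T t ω, X t ω) with hZ
  have hZmeas : Measurable Z := (hTmeas t).prodMk (hXmeas t)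
  -- the shock terms
  set f : ℕ → Ω → ℝ := fun j ω => μv ⬝ᵥ (B ^ (m - j - 1)).mulVec (η (j + 1) ω) with hf
  have hf_eq : ∀ j, f j = fun ω => ∑ k, ((B ^ (m - j - 1)).vecMul μv) k * η (j + 1) ω k := by
    intro j; funext ω
    show μv ⬝ᵥ (B ^ (m - j - 1)).mulVec (η (j + 1) ω) = _
    rw [Matrix.dotProduct_mulVec]; rfl
  have hfint : ∀ j, Integrable (f j) μPr := by
    intro j; rw [hf_eq]
    exact integrable_finset_sum _ (fun k _ => (hηint (j + 1) k).const_mul _)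
  have hfmean : ∀ j, ∫ ω, f j ω ∂μPr = 0 := by
    intro j; rw [hf_eq]
    rw [integral_finset_sum _ (fun k _ => (hηint (j + 1) k).const_mul _)]
    simp [integral_const_mul, hηmean]
  have hfmeas : ∀ j, Measurable (f j) := by
    intro j; rw [hf_eq]
    exact Finset.measurable_sum _ (fun k _ =>
      ((measurable_pi_apply k).comp (hηmeas (j + 1))).const_mul _)
  have hfind : ∀ j ∈ Finset.Ico t m, IndepFun (f j) Z μPr := by
    intro j hj
    obtain ⟨hj1, hj2⟩ := Finset.mem_Ico.mp hj
    have h1 : IndepFun (η (j + 1)) Z μPr :=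
      hηind (j + 1) (Nat.lt_succ_of_le hj1) hj2
    have hφ : Measurable (fun v : Fin p → ℝ => μv ⬝ᵥ (B ^ (m - j - 1)).mulVec v) := by
      have : (fun v : Fin p → ℝ => μv ⬝ᵥ (B ^ (m - j - 1)).mulVec v) =
          fun v => ∑ k, ((B ^ (m - j - 1)).vecMul μv) k * v k := by
        funext v; rw [Matrix.dotProduct_mulVec]; rfl
      rw [this]
      exact Finset.measurable_sum _ (fun k _ => (measurable_pi_apply k).const_mul _)
    exact h1.comp hφ measurable_id
  -- unrolling the recursion
  have unroll : ∀ ω, ∀ s, t ≤ s → s ≤ m →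
      μv ⬝ᵥ (B ^ (m - s)).mulVec (X s ω) =
        μv ⬝ᵥ (B ^ (m - t)).mulVec (X t ω) +
          ∑ j ∈ Finset.Ico t s,
            (μv ⬝ᵥ (B ^ (m - j - 1)).mulVec (A.mulVec (T j ω)) + f j ω) := by
    intro ω
    intro s hts
    induction s, hts using Nat.le_induction with
    | base => intro _; simp
    | succ s hs ih =>
      intro hsm
      have hsm' : s < m := hsm
      have hrec := ih hsm'.le
      rw [Finset.sum_Ico_succ_top hs]
      have hXs : X (s + 1) ω = A.mulVec (T s ω) + B.mulVec (X s ω) + η (s + 1) ω := by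
        rw [hXeq s]
      have hpow : B ^ (m - s - 1) * B = B ^ (m - s) := by
        rw [← pow_succ]
        congr 1
        omega
      have hms : m - (s + 1) = m - s - 1 := by omega
      rw [hms, hXs]
      simp only [Matrix.mulVec_add, dotProduct_add, Matrix.mulVec_mulVec, hpow, hf]
        at hrec ⊢
      rw [hrec]
      ring
  -- the key pointwise identity
  have key : (fun ω =>
      (Y ω - ∑ j ∈ Finset.Icc (t + 1) m, ψ j ⬝ᵥ T j ω) - ψ t ⬝ᵥ T t ω -
        μv ⬝ᵥ ((B ^ (m - t)).mulVec (X t ω))) =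
      fun ω => ε ω + ∑ j ∈ Finset.Ico t m, f j ω := by
    funext ω
    have h1 : ψ t ⬝ᵥ T t ω + ∑ j ∈ Finset.Icc (t + 1) m, ψ j ⬝ᵥ T j ω =
        ∑ j ∈ Finset.Icc t m, ψ j ⬝ᵥ T j ω := by
      have hins : Finset.Icc t m = insert t (Finset.Icc (t + 1) m) := by
        rw [Finset.Icc_add_one_left_eq_Ioc, Finset.Ioc_insert_left htm]
      rw [hins, Finset.sum_insert (by simp)]
    have h2 : ∑ j ∈ Finset.Icc t m, ψ j ⬝ᵥ T j ω =
        θ₀ ⬝ᵥ T m ω +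
          ∑ j ∈ Finset.Ico t m, μv ⬝ᵥ (B ^ (m - j - 1)).mulVec (A.mulVec (T j ω)) := by
      rw [← Finset.Ico_insert_right htm, Finset.sum_insert (by simp)]
      congr 1
      · rw [hψ m]; simp
      · refine Finset.sum_congr rfl (fun j hj => ?_)
        have hjm : j < m := (Finset.mem_Ico.mp hj).2
        rw [hψ j, if_neg hjm.ne]
        rw [Matrix.dotProduct_mulVec, Matrix.dotProduct_mulVec, ← Matrix.transpose_pow,
          Matrix.mulVec_transpose, Matrix.mulVec_transpose]
    have h3 := unroll ω m htm le_rfl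
    simp only [Nat.sub_self, pow_zero, Matrix.one_mulVec] at h3
    have hsplit : ∑ j ∈ Finset.Ico t m,
        (μv ⬝ᵥ (B ^ (m - j - 1)).mulVec (A.mulVec (T j ω)) + f j ω) =
        (∑ j ∈ Finset.Ico t m, μv ⬝ᵥ (B ^ (m - j - 1)).mulVec (A.mulVec (T j ω))) +
          ∑ j ∈ Finset.Ico t m, f j ω := Finset.sum_add_distrib
    rw [hYeq]
    simp only
    linarith [h1, h2, h3, hsplit]
  rw [key, show (fun ω => ε ω + ∑ j ∈ Finset.Ico t m, f j ω) =
    ε + ∑ j ∈ Finset.Ico t m, f j from by funext ω; simp]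
  have hSint' : Integrable (∑ j ∈ Finset.Ico t m, f j) μPr :=
    integrable_finset_sum' _ (fun j _ => hfint j)
  refine (condExp_add (m := MeasurableSpace.comap Z inferInstance) hεint hSint').trans ?_
  have hsum := condExp_finsetSum (μ := μPr) (m := MeasurableSpace.comap Z inferInstance)
    (s := Finset.Ico t m) (f := f) (fun j _ => hfint j)
  have hε0 : μPr[ε | MeasurableSpace.comap Z inferInstance] =ᵐ[μPr] fun _ => 0 :=
    condexp_zero_of_indepFun μPr hεmeas hZmeas hεind hεmean
  have hterm : ∀ j ∈ Finset.Ico t m,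
      μPr[f j | MeasurableSpace.comap Z inferInstance] =ᵐ[μPr] fun _ => 0 := fun j hj =>
    condexp_zero_of_indepFun μPr (hfmeas j) hZmeas (hfind j hj) (hfmean j)
  have hall : ∀ᵐ ω ∂μPr, ∀ j ∈ Finset.Ico t m,
      (μPr[f j | MeasurableSpace.comap Z inferInstance]) ω = 0 :=
    (ae_ball_iff (Finset.Ico t m).countable_toSet).mpr hterm
  filter_upwards [hε0, hsum, hall] with ω h1 h2 h3
  simp only [Pi.add_apply, h1, h2, zero_add]
  rw [Finset.sum_apply]
  exact Finset.sum_eq_zero h3
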